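/- Let G : ℝ → ℝ be a nondecreasing function with 0 ≤ G(y) ≤ 1 for all y, let y₁, y₂ ∈ ℝ and s > 0, and let (λₙ), (μₙ), (βₙ) be sequences of reals with λₙ → λ > 0, μₙ → μ > 0, βₙ → β and βₙ ≥ 0. Then lim_{n→∞} (1/√n) · Σ_{j=1}^{⌊λₙ s √n⌋} [(1/μₙ²)·G(y₁ + j/(λₙ√n)) + βₙ²]·[1 − G(y₂ + j/(λₙ√n))] = λ ∫_0^s ((1/μ²)·G(y₁ + x) + β²)·(1 − G(y₂ + x)) dx. -/

import Mathlib

open MeasureTheory Filter Set Topology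

lemma step_int (f : ℝ → ℝ) {c : ℝ} (hc : 0 < c) (N : ℕ) :
    ∫ x in (0:ℝ)..((N : ℝ)/c), f ((⌈c * x⌉ : ℝ) / c) =
      ∑ j ∈ Finset.Icc 1 N, (1/c) * f ((j : ℝ)/c) := by
  have hstep : ∀ i : ℕ, ∀ x ∈ Set.uIoc ((i:ℝ)/c) (((i:ℝ)+1)/c),
      f ((⌈c * x⌉ : ℝ) / c) = f (((i:ℝ)+1)/c) := by
    intro i x hx
    have hle : (i:ℝ)/c ≤ ((i:ℝ)+1)/c := by
      gcongr
      linarith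
    rw [uIoc_of_le hle] at hx
    have h1 : (i:ℝ) < c * x := by
      have := (div_lt_iff₀ hc).mp hx.1
      linarith
    have h2 : c * x ≤ (i:ℝ) + 1 := by
      have := (le_div_iff₀ hc).mp hx.2
      linarith
    have hceil : ⌈c * x⌉ = (i:ℤ) + 1 := by
      rw [Int.ceil_eq_iff]
      constructor <;> push_cast <;> linarith
    rw [hceil]
    push_cast
    ring_nf
  have hcast : ∀ i : ℕ, (((i+1 : ℕ)):ℝ)/c = ((i:ℝ)+1)/c := by
    intro i; push_cast; ring
  have hval : ∀ i : ℕ, ∫ x in ((i:ℝ)/c)..(((i:ℝ)+1)/c), f ((⌈c * x⌉ : ℝ) / c)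
      = (1/c) * f (((i:ℝ)+1)/c) := by
    intro i
    rw [intervalIntegral.integral_congr_ae (MeasureTheory.ae_of_all _ (hstep i))]
    rw [intervalIntegral.integral_const]
    have : ((i:ℝ)+1)/c - (i:ℝ)/c = 1/c := by field_simp; ring
    rw [this, smul_eq_mul]
  have hadj : ∑ k ∈ Finset.range N,
        ∫ x in (((k:ℕ):ℝ)/c)..((((k+1:ℕ)):ℝ)/c), f ((⌈c * x⌉ : ℝ) / c)
      = ∫ x in (((0:ℕ):ℝ)/c)..(((N:ℕ):ℝ)/c), f ((⌈c * x⌉ : ℝ) / c) := by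
    apply intervalIntegral.sum_integral_adjacent_intervals
    intro k _
    rw [hcast k]
    have hconst : IntervalIntegrable (fun _ : ℝ => f (((k:ℝ)+1)/c)) volume
        ((k:ℝ)/c) (((k:ℝ)+1)/c) := intervalIntegrable_const
    apply hconst.congr
    intro x hx
    exact (hstep k x hx).symm
  have h0 : ((0:ℕ):ℝ)/c = (0:ℝ) := by norm_num
  rw [h0] at hadj
  rw [← hadj]
  rw [← Finset.Ico_add_one_right_eq_Icc, Finset.sum_Ico_eq_sum_range]
  simp only [Nat.add_sub_cancel_left, Nat.succ_sub_one, Nat.add_sub_cancel]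
  apply Finset.sum_congr rfl
  intro i _
  rw [hcast i, hval i]
  congr 2
  push_cast
  ring

/-- Riemann-sum convergence
`(1/√n) Σ_{j=1}^{⌊λₙ s √n⌋} [(1/μₙ²) G(y₁ + j/(λₙ√n)) + βₙ²][1 - G(y₂ + j/(λₙ√n))]
  → λ ∫₀ˢ ((1/μ²) G(y₁+x) + β²)(1 - G(y₂+x)) dx`. -/
theorem stmt_9
    (G : ℝ → ℝ) (hmono : Monotone G)
    (hG0 : ∀ y, 0 ≤ G y) (hG1 : ∀ y, G y ≤ 1)
    (y₁ y₂ s : ℝ) (hs : 0 < s)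
    (lam mu beta : ℕ → ℝ) (l m b : ℝ)
    (hlam : Filter.Tendsto lam Filter.atTop (nhds l)) (hl : 0 < l)
    (hmu : Filter.Tendsto mu Filter.atTop (nhds m)) (hm : 0 < m)
    (hbeta : Filter.Tendsto beta Filter.atTop (nhds b)) (hbnn : ∀ n, 0 ≤ beta n) :
    Filter.Tendsto
      (fun n : ℕ => (1 / Real.sqrt n) *
        ∑ j ∈ Finset.Icc 1 ⌊lam n * s * Real.sqrt n⌋₊,
          ((1 / (mu n) ^ 2) * G (y₁ + (j : ℝ) / (lam n * Real.sqrt n)) + (beta n) ^ 2) *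
            (1 - G (y₂ + (j : ℝ) / (lam n * Real.sqrt n))))
      Filter.atTop
      (nhds (l * ∫ x in (0 : ℝ)..s,
        ((1 / m ^ 2) * G (y₁ + x) + b ^ 2) * (1 - G (y₂ + x)))) := by
  classical
  set flim : ℝ → ℝ := fun x => ((1 / m ^ 2) * G (y₁ + x) + b ^ 2) * (1 - G (y₂ + x)) with hflim
  set f : ℕ → ℝ → ℝ := fun n x =>
    ((1 / (mu n) ^ 2) * G (y₁ + x) + (beta n) ^ 2) * (1 - G (y₂ + x)) with hfdef
  set c : ℕ → ℝ := fun n => lam n * Real.sqrt n with hcdef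
  set N : ℕ → ℕ := fun n => ⌊lam n * s * Real.sqrt n⌋₊ with hNdef
  set T : ℕ → ℝ := fun n => (N n : ℝ) / c n with hTdef
  set h : ℕ → ℝ → ℝ := fun n =>
    (Set.Ioc (0:ℝ) (T n)).indicator (fun x => f n ((⌈c n * x⌉ : ℝ) / c n)) with hhdef
  have hGmeas : Measurable G := hmono.measurable
  have hsqrt : Tendsto (fun n : ℕ => Real.sqrt n) atTop atTop := by
    apply tendsto_atTop.2
    intro C
    filter_upwards [eventually_ge_atTop (⌈(max C 0)^2⌉₊)] with n hn
    calc C ≤ max C 0 := le_max_left _ _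
      _ = Real.sqrt ((max C 0)^2) := (Real.sqrt_sq (le_max_right _ _)).symm
      _ ≤ Real.sqrt n := by
          apply Real.sqrt_le_sqrt
          calc (max C 0)^2 ≤ (⌈(max C 0)^2⌉₊ : ℝ) := Nat.le_ceil _
            _ ≤ (n : ℝ) := by exact_mod_cast hn
  have hctop : Tendsto c atTop atTop := by
    rw [hcdef]
    exact hlam.pos_mul_atTop hl hsqrt
  have hcpos : ∀ᶠ n in atTop, 0 < c n := hctop.eventually_gt_atTop 0
  have hlampos : ∀ᶠ n in atTop, 0 < lam n := hlam.eventually (eventually_gt_nhds hl)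
  have hcinv : Tendsto (fun n => 1 / c n) atTop (𝓝 0) := by
    have := hctop.inv_tendsto_atTop; simp only [one_div]; exact this
  -- T n → s
  have hT : Tendsto T atTop (𝓝 s) := by
    apply tendsto_of_tendsto_of_tendsto_of_le_of_le' (g := fun n => s - 1 / c n)
      (h := fun _ => s)
    · simpa using tendsto_const_nhds.sub hcinv
    · exact tendsto_const_nhds
    · filter_upwards [hcpos, hlampos] with n hc hlp
      rw [hTdef]
      rw [le_div_iff₀ hc]
      have hfl : lam n * s * Real.sqrt n - 1 < (N n : ℝ) := Nat.sub_one_lt_floor _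
      have hcne : c n ≠ 0 := ne_of_gt hc
      have hexp : (s - 1 / c n) * c n = s * c n - 1 := by field_simp
      have hceq : c n = lam n * Real.sqrt n := by rw [hcdef]
      rw [hexp, hceq]
      nlinarith [hfl]
    · filter_upwards [hcpos, hlampos] with n hc hlp
      rw [hTdef, div_le_iff₀ hc]
      have hfl : (N n : ℝ) ≤ lam n * s * Real.sqrt n :=
        Nat.floor_le (by positivity)
      have hceq : c n = lam n * Real.sqrt n := by rw [hcdef]
      rw [hceq]
      nlinarith [hfl]
  -- measurability
  have hfmeas : ∀ n, Measurable (f n) := by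
    intro n
    rw [hfdef]
    exact (((hGmeas.comp (measurable_id.const_add y₁)).const_mul _).add
      measurable_const).mul (measurable_const.sub (hGmeas.comp (measurable_id.const_add y₂)))
  have hzmeas : ∀ n, Measurable (fun x : ℝ => (⌈c n * x⌉ : ℝ) / c n) := by
    intro n
    exact (measurable_from_top.comp (Int.measurable_ceil.comp
      (measurable_id.const_mul (c n)))).div_const (c n)
  have hhmeas : ∀ n, AEStronglyMeasurable (h n) volume := by
    intro n
    rw [hhdef]
    exact (((hfmeas n).comp (hzmeas n)).indicator measurableSet_Ioc).aestronglyMeasurable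
  -- bound
  set C : ℝ := 4 / m^2 + (|b| + 1)^2 with hCdef
  set bound : ℝ → ℝ := (Set.Ioc (0:ℝ) (s+1)).indicator (fun _ => C) with hbounddef
  have hC0 : (0:ℝ) ≤ C := by positivity
  have hbound_nonneg : ∀ x, 0 ≤ bound x := fun x =>
    Set.indicator_nonneg (fun _ _ => hC0) x
  have hbound_int : Integrable bound := by
    rw [hbounddef]
    rw [integrable_indicator_iff measurableSet_Ioc]
    exact integrableOn_const measure_Ioc_lt_top.ne
  have hmu_ev : ∀ᶠ n in atTop, m/2 < mu n := hmu.eventually (eventually_gt_nhds (by linarith))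
  have hbeta_lt : ∀ᶠ n in atTop, beta n < b + 1 :=
    hbeta.eventually (eventually_lt_nhds (by linarith))
  have hbeta_gt : ∀ᶠ n in atTop, b - 1 < beta n :=
    hbeta.eventually (eventually_gt_nhds (by linarith))
  have hT_le : ∀ᶠ n in atTop, T n ≤ s + 1 :=
    (hT.eventually (eventually_lt_nhds (by linarith : s < s + 1))).mono fun n hn => hn.le
  have hfb : ∀ n (y : ℝ), m/2 < mu n → b - 1 < beta n → beta n < b + 1 → |f n y| ≤ C := by
    intro n y h1 h2 h3
    have hmun : 0 < mu n := lt_trans (by positivity) h1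
    have hA0 : (0:ℝ) ≤ 1/(mu n)^2 := by positivity
    have hA : 1/(mu n)^2 ≤ 4/m^2 := by
      rw [div_le_div_iff₀ (by positivity) (by positivity)]
      nlinarith
    have hB : (beta n)^2 ≤ (|b|+1)^2 := by
      nlinarith [le_abs_self b, neg_abs_le b]
    have hg1 := hG0 (y₁ + y); have hg1' := hG1 (y₁ + y)
    have hg2 := hG0 (y₂ + y); have hg2' := hG1 (y₂ + y)
    have h4 : 0 ≤ f n y := by
      rw [hfdef]
      apply mul_nonneg (add_nonneg (mul_nonneg hA0 hg1) (sq_nonneg _)) (by linarith)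
    rw [abs_of_nonneg h4, hfdef, hCdef]
    simp only []
    have hP0 : 0 ≤ 1/(mu n)^2 * G (y₁ + y) + (beta n)^2 :=
      add_nonneg (mul_nonneg hA0 hg1) (sq_nonneg _)
    calc (1 / mu n ^ 2 * G (y₁ + y) + beta n ^ 2) * (1 - G (y₂ + y))
        ≤ (1 / mu n ^ 2 * G (y₁ + y) + beta n ^ 2) * 1 :=
          mul_le_mul_of_nonneg_left (by linarith) hP0
      _ = 1 / mu n ^ 2 * G (y₁ + y) + beta n ^ 2 := mul_one _
      _ ≤ 4 / m ^ 2 + (|b| + 1) ^ 2 := by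
          nlinarith [mul_le_mul_of_nonneg_left hg1' hA0]
  have h_bound : ∀ᶠ n in atTop, ∀ᵐ x, ‖h n x‖ ≤ bound x := by
    filter_upwards [hmu_ev, hbeta_gt, hbeta_lt, hT_le] with n h1 h2 h3 h4
    apply MeasureTheory.ae_of_all
    intro x
    by_cases hx : x ∈ Set.Ioc (0:ℝ) (T n)
    · have hhx : h n x = f n ((⌈c n * x⌉ : ℝ) / c n) := by
        rw [hhdef]; exact Set.indicator_of_mem hx _
      have hx' : x ∈ Set.Ioc (0:ℝ) (s+1) := ⟨hx.1, hx.2.trans h4⟩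
      rw [hhx, Real.norm_eq_abs, hbounddef, Set.indicator_of_mem hx']
      exact hfb n _ h1 h2 h3
    · have hhx : h n x = 0 := by rw [hhdef]; exact Set.indicator_of_notMem hx _
      rw [hhx, norm_zero]
      exact hbound_nonneg x
  -- a.e. limit
  set g : ℝ → ℝ := (Set.Ioc (0:ℝ) s).indicator flim with hgdef
  have hDcnt : Set.Countable {x : ℝ | ¬ContinuousAt G x} := hmono.countable_not_continuousAt
  have hcnt1 : Set.Countable {x : ℝ | ¬ContinuousAt G (y₁ + x)} := by
    have : {x : ℝ | ¬ContinuousAt G (y₁ + x)} ⊆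
        (fun u => u - y₁) '' {x : ℝ | ¬ContinuousAt G x} := by
      intro x hx
      exact ⟨y₁ + x, hx, by ring⟩
    exact (hDcnt.image _).mono this
  have hcnt2 : Set.Countable {x : ℝ | ¬ContinuousAt G (y₂ + x)} := by
    have : {x : ℝ | ¬ContinuousAt G (y₂ + x)} ⊆
        (fun u => u - y₂) '' {x : ℝ | ¬ContinuousAt G x} := by
      intro x hx
      exact ⟨y₂ + x, hx, by ring⟩
    exact (hDcnt.image _).mono this
  have hEcnt : Set.Countable ({x : ℝ | ¬ContinuousAt G (y₁ + x)} ∪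
      {x : ℝ | ¬ContinuousAt G (y₂ + x)} ∪ {s}) :=
    (hcnt1.union hcnt2).union (Set.countable_singleton s)
  have h_lim : ∀ᵐ x, Tendsto (fun n => h n x) atTop (𝓝 (g x)) := by
    filter_upwards [hEcnt.ae_notMem volume] with x hx
    simp only [Set.mem_union, Set.mem_setOf_eq, Set.mem_singleton_iff, not_or] at hx
    obtain ⟨⟨hc1, hc2⟩, hxs⟩ := hx
    rw [not_not] at hc1 hc2
    by_cases hx0 : x ≤ 0
    · have hg0 : g x = 0 := by
        rw [hgdef]; exact Set.indicator_of_notMem (fun hmem => absurd hmem.1 (not_lt.2 hx0)) _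
      have hh0 : ∀ n, h n x = 0 := fun n => by
        rw [hhdef]; exact Set.indicator_of_notMem (fun hmem => absurd hmem.1 (not_lt.2 hx0)) _
      rw [hg0]
      exact tendsto_const_nhds.congr fun n => (hh0 n).symm
    · push_neg at hx0
      by_cases hxlt : x < s
      · have hgx : g x = flim x := by
          rw [hgdef]; exact Set.indicator_of_mem (Set.mem_Ioc.mpr ⟨hx0, hxlt.le⟩) _
        rw [hgx]
        have hev : ∀ᶠ n in atTop, f n ((⌈c n * x⌉ : ℝ) / c n) = h n x := by
          filter_upwards [hT.eventually (eventually_gt_nhds hxlt)] with n hn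
          simp only [hhdef]
          exact (Set.indicator_of_mem (Set.mem_Ioc.mpr ⟨hx0, hn.le⟩)
            (fun x => f n ((⌈c n * x⌉ : ℝ) / c n))).symm
        have hz : Tendsto (fun n => (⌈c n * x⌉ : ℝ) / c n) atTop (𝓝 x) := by
          apply tendsto_of_tendsto_of_tendsto_of_le_of_le' (g := fun _ => x)
            (h := fun n => x + 1 / c n)
          · exact tendsto_const_nhds
          · simpa using tendsto_const_nhds.add hcinv
          · filter_upwards [hcpos] with n hc
            rw [le_div_iff₀ hc]
            calc x * c n = c n * x := by ring
              _ ≤ (⌈c n * x⌉ : ℝ) := Int.le_ceil _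
          · filter_upwards [hcpos] with n hc
            rw [div_le_iff₀ hc]
            have := Int.ceil_lt_add_one (c n * x)
            have hcne : c n ≠ 0 := ne_of_gt hc
            calc (⌈c n * x⌉ : ℝ) ≤ c n * x + 1 := this.le
              _ = (x + 1 / c n) * c n := by field_simp
          
        have hz1 : Tendsto (fun n => G (y₁ + (⌈c n * x⌉ : ℝ) / c n)) atTop (𝓝 (G (y₁ + x))) :=
          hc1.tendsto.comp (tendsto_const_nhds.add hz)
        have hz2 : Tendsto (fun n => G (y₂ + (⌈c n * x⌉ : ℝ) / c n)) atTop (𝓝 (G (y₂ + x))) :=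
          hc2.tendsto.comp (tendsto_const_nhds.add hz)
        have hmain : Tendsto (fun n => f n ((⌈c n * x⌉ : ℝ) / c n)) atTop (𝓝 (flim x)) := by
          rw [hfdef, hflim]
          exact (((tendsto_const_nhds.div (hmu.pow 2) (by positivity)).mul hz1).add
            (hbeta.pow 2)).mul (tendsto_const_nhds.sub hz2)
        exact hmain.congr' hev
      · have hxgt : s < x := lt_of_le_of_ne (not_lt.mp hxlt) (Ne.symm hxs)
        have hg0 : g x = 0 := by
          rw [hgdef]
          exact Set.indicator_of_notMem (fun hmem => absurd hmem.2 (not_le.2 hxgt)) _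
        rw [hg0]
        have hev : ∀ᶠ n in atTop, (0:ℝ) = h n x := by
          filter_upwards [hT.eventually (eventually_lt_nhds hxgt)] with n hn
          rw [hhdef]
          exact (Set.indicator_of_notMem (fun hmem => absurd hmem.2 (not_le.2 hn)) _).symm
        exact tendsto_const_nhds.congr' hev
  -- dominated convergence
  have hkey : Tendsto (fun n => ∫ x, h n x) atTop (𝓝 (∫ x, g x)) :=
    MeasureTheory.tendsto_integral_filter_of_dominated_convergence bound
      (Eventually.of_forall hhmeas) h_bound hbound_int h_lim
  have hgint : ∫ x, g x = ∫ x in (0:ℝ)..s, flim x := by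
    rw [hgdef, MeasureTheory.integral_indicator measurableSet_Ioc,
      intervalIntegral.integral_of_le hs.le]
  have hfinal : Tendsto (fun n => lam n * ∫ x, h n x) atTop
      (𝓝 (l * ∫ x in (0:ℝ)..s, flim x)) := by
    rw [← hgint]
    exact hlam.mul hkey
  apply hfinal.congr'
  filter_upwards [hcpos, hlampos, eventually_ge_atTop 1] with n hc hlp hn1
  have hTnn : (0:ℝ) ≤ T n := by
    rw [hTdef]; exact div_nonneg (Nat.cast_nonneg _) hc.le
  have hint_eq : ∫ x, h n x = ∑ j ∈ Finset.Icc 1 (N n), (1 / c n) * f n ((j:ℝ) / c n) := by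
    rw [hhdef]
    rw [MeasureTheory.integral_indicator measurableSet_Ioc,
      ← intervalIntegral.integral_of_le hTnn, hTdef]
    exact step_int (f n) hc (N n)
  rw [hint_eq, Finset.mul_sum, Finset.mul_sum]
  apply Finset.sum_congr rfl
  intro j _
  have hsqpos : 0 < Real.sqrt n := Real.sqrt_pos.2 (by
    have : (1:ℝ) ≤ (n:ℝ) := by exact_mod_cast hn1
    linarith)
  rw [hfdef, hcdef]
  have hlne : lam n ≠ 0 := ne_of_gt hlp
  have hsne : Real.sqrt n ≠ 0 := ne_of_gt hsqpos
  field_simp
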